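/- If T and T' are trees of respective orders n and n' with n' ≥ n ≥ 2, then the forest number satisfies f(T □ T') ≤ f(S_n □ S_{n'}). -/

import Mathlib

open SimpleGraph

/-- The star `S_m = K_{1,m-1}` on `m` vertices, with center the vertex `0`. -/
def starGraph (m : ℕ) : SimpleGraph (Fin m) where
  Adj i j := i ≠ j ∧ (i.val = 0 ∨ j.val = 0)
  symm := ⟨fun _ _ h => ⟨h.1.symm, h.2.symm⟩⟩
  loopless := ⟨fun _ h => h.1 rfl⟩

/-- The decycling number: the minimum size of a set of vertices whose removal
leaves an acyclic graph. -/
noncomputable def decyclingNumber {V : Type*} [Fintype V] (G : SimpleGraph V) : ℕ :=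
  sInf {k | ∃ S : Finset V, S.card = k ∧ (G.induce ((↑S : Set V)ᶜ)).IsAcyclic}

/-- The forest number: the maximum size of a set of vertices inducing a forest. -/
noncomputable def forestNumber {V : Type*} [Fintype V] (G : SimpleGraph V) : ℕ :=
  sSup {k | ∃ S : Finset V, S.card = k ∧ (G.induce (↑S : Set V)).IsAcyclic}

/-- The matching number: the maximum size of a set of pairwise non-incident edges. -/
noncomputable def matchingNumber {V : Type*} [Fintype V] (G : SimpleGraph V) : ℕ :=
  sSup {k | ∃ M : Finset (Sym2 V), ↑M ⊆ G.edgeSet ∧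
    (M : Set (Sym2 V)).Pairwise (fun e f => ∀ v, ¬(v ∈ e ∧ v ∈ f)) ∧ M.card = k}

section Aux
variable {α : Type*}

variable {α : Type*}

lemma firstEdge_mem {G : SimpleGraph α} {x y : α} (p : G.Walk x y) (hp : ¬ p.Nil) :
    s(x, p.getVert 1) ∈ p.edges := by
  cases p with
  | nil => simp at hp
  | cons h q =>
    rw [Walk.getVert_cons _ _ one_ne_zero, Nat.sub_self, Walk.getVert_zero]
    simp

lemma acyclic_of_parent {G : SimpleGraph α} (m : α → ℕ) (f : α → α)
    (h : ∀ v w, G.Adj v w → (f w = v ∧ m v < m w) ∨ (f v = w ∧ m w < m v)) :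
    G.IsAcyclic := by
  classical
  intro v c hc
  obtain ⟨u, hu, hmax⟩ := Finset.exists_max_image c.support.toFinset m ⟨v, by simp⟩
  rw [List.mem_toFinset] at hu
  have hc' := hc.rotate hu
  set c' := c.rotate u hu with hc'def
  have hmem : ∀ x ∈ c'.support, m x ≤ m u := by
    intro x hx
    rw [c'.support_eq_cons] at hx
    rcases List.mem_cons.mp hx with rfl | hx
    · exact le_refl _
    · have hx' : x ∈ c.support.tail := (Walk.support_rotate c u hu).mem_iff.mp hx
      exact hmax x (List.mem_toFinset.mpr (List.mem_of_mem_tail hx'))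
  have hnil : ¬ c'.Nil := hc'.not_nil
  have hL : 3 ≤ c'.length := hc'.three_le_length
  have adj1 : G.Adj u (c'.getVert 1) := c'.adj_snd hnil
  have mem1 : c'.getVert 1 ∈ c'.support :=
    Walk.mem_support_iff_exists_getVert.mpr ⟨1, rfl, by omega⟩
  have adj2' := c'.adj_getVert_succ (i := c'.length - 1) (by omega)
  rw [show c'.length - 1 + 1 = c'.length by omega, c'.getVert_length] at adj2'
  have mem2 : c'.getVert (c'.length - 1) ∈ c'.support :=
    Walk.mem_support_iff_exists_getVert.mpr ⟨_, rfl, by omega⟩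
  have e1 : f u = c'.getVert 1 := by
    rcases h u _ adj1 with ⟨_, hlt⟩ | ⟨he, _⟩
    · exact absurd hlt (not_lt.mpr (hmem _ mem1))
    · exact he
  have e2 : f u = c'.getVert (c'.length - 1) := by
    rcases h _ u adj2' with ⟨he, _⟩ | ⟨_, hlt⟩
    · exact he
    · exact absurd hlt (not_lt.mpr (hmem _ mem2))
  obtain ⟨w1, hadj, q, hce⟩ := Walk.not_nil_iff.mp hnil
  have hqlen : q.length + 1 = c'.length := by rw [hce, Walk.length_cons]
  have ha1 : c'.getVert 1 = w1 := by rw [hce, Walk.getVert_cons _ _ one_ne_zero, Nat.sub_self, Walk.getVert_zero]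
  have ha2 : c'.getVert (c'.length - 1) = q.getVert (q.length - 1) := by
    rw [hce, Walk.length_cons, show q.length + 1 - 1 = (q.length - 1) + 1 by omega,
      Walk.getVert_cons_succ]
  have hrevnil : ¬ q.reverse.Nil := by
    rw [Walk.not_nil_iff_lt_length, Walk.length_reverse]; omega
  have hmm := firstEdge_mem q.reverse hrevnil
  rw [Walk.getVert_reverse, Walk.edges_reverse, List.mem_reverse] at hmm
  rw [show q.length - 1 = q.length - 1 from rfl] at hmm
  have hveq : q.getVert (q.length - 1) = w1 := by
    rw [← ha2, ← e2, e1, ha1]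
  rw [hveq] at hmm
  have hcyc : (Walk.cons hadj q).IsCycle := hce ▸ hc'
  have hnd := hcyc.isCircuit.isTrail.edges_nodup
  rw [Walk.edges_cons] at hnd
  exact (List.nodup_cons.mp hnd).1 hmm

end Aux

section Lift
variable {V W : Type*} {T : SimpleGraph V} {T' : SimpleGraph W}
  {S : Set (V × W)} {E0 : Sym2 ↥S}

lemma lift_row {b : W} (hrow : ∀ z : V, (z, b) ∈ S)
    {x x' : V} (w : T.Walk x x')
    (hE : ∀ z z' : V, s((⟨(z, b), hrow z⟩ : ↥S), (⟨(z', b), hrow z'⟩ : ↥S)) ≠ E0) :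
    (((T.boxProd T').induce S) \ fromEdgeSet {E0}).Reachable
      ⟨(x, b), hrow x⟩ ⟨(x', b), hrow x'⟩ := by
  induction w with
  | nil => exact Reachable.refl _
  | cons hadj q ih =>
    rename_i a a' a'' 
    refine (Adj.reachable ?_).trans ih
    rw [sdiff_adj]
    refine ⟨?_, ?_⟩
    · exact boxProd_adj_left.mpr hadj
    · rw [fromEdgeSet_adj]
      rintro ⟨hm, -⟩
      exact hE a a' (by simpa using hm)

lemma lift_col {x : V} (hcol : ∀ z : W, (x, z) ∈ S)
    {y y' : W} (w : T'.Walk y y')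
    (hE : ∀ z z' : W, s(z, z') ∈ w.edges →
      s((⟨(x, z), hcol z⟩ : ↥S), (⟨(x, z'), hcol z'⟩ : ↥S)) ≠ E0) :
    (((T.boxProd T').induce S) \ fromEdgeSet {E0}).Reachable
      ⟨(x, y), hcol y⟩ ⟨(x, y'), hcol y'⟩ := by
  induction w with
  | nil => exact Reachable.refl _
  | cons hadj q ih =>
    rename_i a a' a''
    refine (Adj.reachable ?_).trans
      (ih (fun z z' hm => hE z z' (by rw [Walk.edges_cons]; exact List.mem_cons_of_mem _ hm)))
    rw [sdiff_adj]
    refine ⟨?_, ?_⟩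
    · exact boxProd_adj_right.mpr hadj
    · rw [fromEdgeSet_adj]
      rintro ⟨hm, -⟩
      exact hE a a' (by rw [Walk.edges_cons]; exact List.mem_cons_self) (by simpa using hm)

end Lift

lemma upper_bound {V W : Type*} [Fintype V] [Fintype W]
    (T : SimpleGraph V) (T' : SimpleGraph W)
    (hTc : T.Connected) (hT'c : T'.Connected)
    (h2 : 2 ≤ Fintype.card V) (hnn' : Fintype.card V ≤ Fintype.card W)
    (S : Finset (V × W)) (hac : ((T.boxProd T').induce (↑S : Set (V × W))).IsAcyclic) :
    S.card ≤ Fintype.card V * Fintype.card W - (Fintype.card V - 1) := by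
  classical
  set n := Fintype.card V with hn
  set n' := Fintype.card W with hn'
  by_contra hk
  push_neg at hk
  have hN : Fintype.card (V × W) = n * n' := Fintype.card_prod V W
  have hSle : S.card ≤ n * n' := by
    have := S.card_le_univ
    rwa [hN] at this
  have h2n : 2 * n ≤ n * n' := by
    rw [mul_comm]
    exact Nat.mul_le_mul_left n (le_trans h2 hnn')
  set D := (Finset.univ \ S) with hD
  have hDcard : D.card = n * n' - S.card := by
    rw [hD, Finset.card_sdiff_of_subset (Finset.subset_univ S), Finset.card_univ, hN]
  have hDsmall : D.card ≤ n - 2 := by omega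
  -- free columns
  have hCcard : (D.image Prod.fst).card ≤ n - 2 := le_trans Finset.card_image_le hDsmall
  have hCc : 1 < (Finset.univ \ D.image Prod.fst).card := by
    rw [Finset.card_sdiff_of_subset (Finset.subset_univ _), Finset.card_univ]
    omega
  obtain ⟨u, hu, u', hu', huu'⟩ := Finset.one_lt_card.mp hCc
  have hfreecol : ∀ z : V, z ∈ Finset.univ \ D.image Prod.fst →
      ∀ a : W, ((z, a) : V × W) ∈ (↑S : Set (V × W)) := by
    intro z hz a
    by_contra hna
    have hd : (z, a) ∈ D := Finset.mem_sdiff.mpr ⟨Finset.mem_univ _, by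
      simpa [Finset.mem_coe] using hna⟩
    exact (Finset.mem_sdiff.mp hz).2 (Finset.mem_image.mpr ⟨(z, a), hd, rfl⟩)
  have hufree := hfreecol u hu
  have hu'free := hfreecol u' hu'
  -- free rows
  have hRcard : (D.image Prod.snd).card ≤ n - 2 := le_trans Finset.card_image_le hDsmall
  have hRc : 1 < (Finset.univ \ D.image Prod.snd).card := by
    rw [Finset.card_sdiff_of_subset (Finset.subset_univ _), Finset.card_univ]
    omega
  obtain ⟨b, hb, b', hb', hbb'⟩ := Finset.one_lt_card.mp hRc
  have hfreerow : ∀ z : W, z ∈ Finset.univ \ D.image Prod.snd →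
      ∀ a : V, ((a, z) : V × W) ∈ (↑S : Set (V × W)) := by
    intro z hz a
    by_contra hna
    have hd : (a, z) ∈ D := Finset.mem_sdiff.mpr ⟨Finset.mem_univ _, by
      simpa [Finset.mem_coe] using hna⟩
    exact (Finset.mem_sdiff.mp hz).2 (Finset.mem_image.mpr ⟨(a, z), hd, rfl⟩)
  have hbfree := hfreerow b hb
  have hb'free := hfreerow b' hb'
  -- path in T' from b to b'
  obtain ⟨wbb⟩ := hT'c.preconnected b b'
  obtain ⟨wuu⟩ := hTc.preconnected u u'
  set pw : T'.Walk b b' := (wbb.toPath : T'.Path b b').val with hpwdef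
  have hpw : pw.IsPath := (wbb.toPath : T'.Path b b').property
  have hpnil : ¬ pw.Nil := Walk.not_nil_of_ne hbb'
  set y1 := pw.getVert 1 with hy1
  have hby1 : T'.Adj b y1 := pw.adj_snd hpnil
  have hbney1 : b ≠ y1 := hby1.ne
  have hbnotail : b ∉ pw.tail.support := by
    have hnd := hpw.support_nodup
    rw [← pw.cons_support_tail hpnil] at hnd
    exact (List.nodup_cons.mp hnd).1
  -- the bridge edge
  set v0 : ↥(↑S : Set (V × W)) := ⟨(u, b), hufree b⟩ with hv0
  set w0 : ↥(↑S : Set (V × W)) := ⟨(u, y1), hufree y1⟩ with hw0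
  have hadj0 : ((T.boxProd T').induce (↑S : Set (V × W))).Adj v0 w0 :=
    boxProd_adj_right.mpr hby1
  have hbridge := isAcyclic_iff_forall_adj_isBridge.mp hac hadj0
  rw [isBridge_iff] at hbridge
  apply hbridge
  -- helper to analyse equality with the bridge edge
  have key : ∀ (p q : V × W) (hp : p ∈ (↑S : Set (V × W))) (hq : q ∈ (↑S : Set (V × W))),
      s((⟨p, hp⟩ : ↥(↑S : Set (V × W))), ⟨q, hq⟩) = s(v0, w0) →
      ((p = (u, b) ∧ q = (u, y1)) ∨ (p = (u, y1) ∧ q = (u, b))) := by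
    intro p q hp hq hs
    rw [Sym2.eq_iff] at hs
    rcases hs with ⟨h1, h2⟩ | ⟨h1, h2⟩
    · left
      exact ⟨congrArg Subtype.val h1, congrArg Subtype.val h2⟩
    · right
      exact ⟨congrArg Subtype.val h1, congrArg Subtype.val h2⟩
  -- segment 1 : (u,b) to (u',b) along row b
  have seg1 := lift_row (T := T) (T' := T') (E0 := s(v0, w0)) hbfree wuu (by
    intro z z' hs
    rcases key _ _ _ _ hs with ⟨h1, h2⟩ | ⟨h1, h2⟩
    · exact hbney1 (congrArg Prod.snd h2)
    · exact hbney1 (congrArg Prod.snd h1))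
  -- segment 2 : (u',b) to (u',b') along column u'
  have seg2 := lift_col (T := T) (T' := T') (E0 := s(v0, w0)) hu'free pw (by
    intro z z' _ hs
    rcases key _ _ _ _ hs with ⟨h1, h2⟩ | ⟨h1, h2⟩
    · exact huu' ((congrArg Prod.fst h1).symm)
    · exact huu' ((congrArg Prod.fst h1).symm))
  -- segment 3 : (u',b') to (u,b') along row b'
  have hb'ne : b' ≠ b := fun h => hbb' h.symm
  have seg3 := lift_row (T := T) (T' := T') (E0 := s(v0, w0)) hb'free wuu.reverse (by
    intro z z' hs
    rcases key _ _ _ _ hs with ⟨h1, h2⟩ | ⟨h1, h2⟩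
    · exact hb'ne (congrArg Prod.snd h1)
    · exact hb'ne (congrArg Prod.snd h2))
  -- segment 4 : (u,b') to (u,y1) along column u, avoiding vertex b
  have seg4 := lift_col (T := T) (T' := T') (E0 := s(v0, w0)) hufree pw.tail.reverse (by
    intro z z' hm hs
    rw [Walk.edges_reverse, List.mem_reverse] at hm
    have hz : z ∈ pw.tail.support := Walk.fst_mem_support_of_mem_edges _ hm
    have hz' : z' ∈ pw.tail.support := Walk.snd_mem_support_of_mem_edges _ hm
    rcases key _ _ _ _ hs with ⟨h1, h2⟩ | ⟨h1, h2⟩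
    · have hzb : z = b := congrArg Prod.snd h1
      exact hbnotail (hzb ▸ hz)
    · have hzb : z' = b := congrArg Prod.snd h2
      exact hbnotail (hzb ▸ hz'))
  exact ((seg1.trans seg2).trans seg3).trans seg4

lemma lower_bound (n n' : ℕ) (h2 : 2 ≤ n) (h2' : 2 ≤ n') :
    ∃ F : Finset (Fin n × Fin n'), F.card = n * n' - (n - 1) ∧
      (((_root_.starGraph n).boxProd (_root_.starGraph n')).induce (↑F : Set (Fin n × Fin n'))).IsAcyclic := by
  classical
  have hn0 : 0 < n := by omega
  have hn'0 : 0 < n' := by omega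
  set z0 : Fin n := ⟨0, hn0⟩ with hz0
  set z0' : Fin n' := ⟨0, hn'0⟩ with hz0'
  set F : Finset (Fin n × Fin n') :=
    Finset.univ.filter (fun p => p.1.val = 0 ∨ p.2.val ≠ 0) with hF
  have hmemF : ∀ p : Fin n × Fin n', p ∈ F ↔ (p.1.val = 0 ∨ p.2.val ≠ 0) := by
    intro p; simp [hF]
  have hFeq : F = Finset.univ \
      ((Finset.univ.filter (fun i : Fin n => i.val ≠ 0)) ×ˢ ({z0'} : Finset (Fin n'))) := by
    ext ⟨i, j⟩
    simp only [hF, Finset.mem_filter, Finset.mem_univ, true_and, Finset.mem_sdiff,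
      Finset.mem_product, Finset.mem_singleton]
    constructor
    · rintro (h | h)
      · exact fun hc => hc.1 (by simp [h, Fin.ext_iff])
      · exact fun hc => h (by simp [hc.2, hz0'])
    · intro h
      by_cases hi : i.val = 0
      · exact Or.inl hi
      · refine Or.inr fun hj => h ⟨hi, Fin.ext (by simp [hj, hz0'])⟩
  have hfilter : (Finset.univ.filter (fun i : Fin n => i.val ≠ 0)) =
      Finset.univ \ ({z0} : Finset (Fin n)) := by
    ext i
    simp only [Finset.mem_filter, Finset.mem_univ, true_and, Finset.mem_sdiff,
      Finset.mem_singleton]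
    constructor
    · exact fun h hc => h (by simp [hc, hz0])
    · exact fun h hc => h (Fin.ext (by simp [hc, hz0]))
  have hcard : Fintype.card (Fin n × Fin n') = n * n' := by
    rw [Fintype.card_prod, Fintype.card_fin, Fintype.card_fin]
  refine ⟨F, ?_, ?_⟩
  · rw [hFeq, Finset.card_sdiff_of_subset, Finset.card_product, hfilter,
      Finset.card_sdiff_of_subset (by simp), Finset.card_singleton, Finset.card_univ,
      Finset.card_univ, Fintype.card_fin, hcard]
    · simp only [Finset.card_singleton, mul_one]
    · intro p hp
      exact Finset.mem_univ p
  · -- acyclicity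
    have hz0F : (z0, z0') ∈ F := (hmemF _).mpr (Or.inl rfl)
    have hcolF : ∀ j : Fin n', (z0, j) ∈ F := fun j => (hmemF _).mpr (Or.inl rfl)
    refine acyclic_of_parent
      (fun p => if p.val.1.val = 0 then (if p.val.2.val = 0 then 0 else 1) else 2)
      (fun p => if p.val.1.val = 0 then ⟨(z0, z0'), hz0F⟩ else ⟨(z0, p.val.2), hcolF _⟩)
      ?_
    rintro ⟨⟨i, j⟩, hv⟩ ⟨⟨i', j'⟩, hw⟩ hadj
    have hv' : i.val = 0 ∨ j.val ≠ 0 := (hmemF _).mp hv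
    have hw' : i'.val = 0 ∨ j'.val ≠ 0 := (hmemF _).mp hw
    have hadj' : ((_root_.starGraph n).boxProd (_root_.starGraph n')).Adj (i, j) (i', j') := hadj
    rw [boxProd_adj] at hadj'
    dsimp only
    rcases hadj' with ⟨⟨hne, hor⟩, hjj⟩ | ⟨⟨hne, hor⟩, hii⟩
    · -- star edge in first coordinate, j = j'
      dsimp at hjj hne hor
      subst hjj
      rcases hor with hi0 | hi'0
      · -- i.val = 0, so i'.val ≠ 0, and j.val ≠ 0 from hw'
        have hi'ne : i'.val ≠ 0 := fun h => hne (Fin.ext (hi0.trans h.symm))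
        have hjne : j.val ≠ 0 := by tauto
        have hiz : i = z0 := Fin.ext hi0
        left
        constructor
        · rw [if_neg hi'ne]
          refine Subtype.ext ?_
          show (z0, j) = (i, j)
          rw [hiz]
        · rw [if_pos hi0, if_neg hi'ne, if_neg hjne]
          omega
      · have hine : i.val ≠ 0 := fun h => hne (Fin.ext (h.trans hi'0.symm))
        have hjne : j.val ≠ 0 := by tauto
        have hiz' : i' = z0 := Fin.ext hi'0
        right
        constructor
        · rw [if_neg hine]
          refine Subtype.ext ?_
          show (z0, j) = (i', j)
          rw [hiz']
        · rw [if_pos hi'0, if_neg hine, if_neg hjne]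
          omega
    · -- star edge in second coordinate, i = i'
      dsimp at hii hne hor
      subst hii
      rcases hor with hj0 | hj'0
      · -- j.val = 0 hence i.val = 0 (membership of v), and j'.val ≠ 0
        have hi0 : i.val = 0 := by tauto
        have hj'ne : j'.val ≠ 0 := fun h => hne (Fin.ext (hj0.trans h.symm))
        have hiz : i = z0 := Fin.ext hi0
        have hjz : j = z0' := Fin.ext hj0
        left
        constructor
        · rw [if_pos hi0]
          refine Subtype.ext ?_
          show (z0, z0') = (i, j)
          rw [hiz, hjz]
        · rw [if_pos hi0, if_pos hj0, if_pos hi0, if_neg hj'ne]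
          omega
      · have hi0 : i.val = 0 := by tauto
        have hjne : j.val ≠ 0 := fun h => hne (Fin.ext (h.trans hj'0.symm))
        have hiz : i = z0 := Fin.ext hi0
        have hjz' : j' = z0' := Fin.ext hj'0
        right
        constructor
        · rw [if_pos hi0]
          refine Subtype.ext ?_
          show (z0, z0') = (i, j')
          rw [hiz, hjz']
        · rw [if_pos hi0, if_pos hj'0, if_pos hi0, if_neg hjne]
          omega

theorem forest_boxProd_trees_le_stars
    {V W : Type*} [Fintype V] [Fintype W]
    (T : SimpleGraph V) (T' : SimpleGraph W) (n n' : ℕ)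
    (hn : Fintype.card V = n) (hn' : Fintype.card W = n')
    (h2 : 2 ≤ n) (hnn' : n ≤ n')
    (hT : T.IsTree) (hT' : T'.IsTree) :
    forestNumber (T.boxProd T') ≤ forestNumber ((_root_.starGraph n).boxProd (_root_.starGraph n')) := by
  classical
  subst hn
  subst hn'
  obtain ⟨F, hFcard, hFac⟩ :=
    lower_bound (Fintype.card V) (Fintype.card W) h2 (le_trans h2 hnn')
  have h1 : forestNumber (T.boxProd T') ≤
      Fintype.card V * Fintype.card W - (Fintype.card V - 1) := by
    apply csSup_le
    · exact ⟨0, ⟨∅, by simp, fun v _ _ => absurd v.2 (by simp)⟩⟩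
    · rintro k ⟨S, rfl, hS⟩
      exact upper_bound T T' hT.isConnected hT'.isConnected h2 hnn' S hS
  refine h1.trans ?_
  apply le_csSup
  · refine ⟨Fintype.card (Fin (Fintype.card V) × Fin (Fintype.card W)), ?_⟩
    rintro k ⟨S, rfl, -⟩
    exact S.card_le_univ
  · exact ⟨F, hFcard, hFac⟩
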